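/- arXiv:1103.3588 — 2 statements merged into one kernel-verified Lean document; each statement's English description precedes it below -/
import Mathlib

section
/- Let G be a connected simple graph of order n with diam(G) = 2 and β(G) = n − 3, and let G* be its twin graph. If diam(G*) = 1 (that is, G* is a complete graph), then G* ≅ K_3 and G* has at most one vertex of type (1K). -/
namespace PaperMetricDim

open SimpleGraph

variable {V : Type*}

/-- A set `W` of vertices resolves the graph `G`: any two distinct vertices have
different distance to some vertex of `W`. -/
def Resolves (G : SimpleGraph V) (W : Set V) : Prop :=
  ∀ u v : V, u ≠ v → ∃ w ∈ W, G.dist u w ≠ G.dist v w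

/-- The metric dimension of `G`: the minimum cardinality of a resolving set. -/
noncomputable def metricDim (G : SimpleGraph V) : ℕ :=
  sInf {k : ℕ | ∃ W : Set V, Resolves G W ∧ W.ncard = k}

/-- `G` is connected and has diameter exactly `d`. -/
def diamEq (G : SimpleGraph V) (d : ℕ) : Prop :=
  G.Connected ∧ (∀ u v : V, G.dist u v ≤ d) ∧ ∃ u v : V, G.dist u v = d

/-- A set of vertices is homogeneous if it induces a complete or an empty subgraph. -/
def Homogeneous (G : SimpleGraph V) (S : Set V) : Prop :=
  (∀ a ∈ S, ∀ b ∈ S, a ≠ b → G.Adj a b) ∨ (∀ a ∈ S, ∀ b ∈ S, ¬ G.Adj a b)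

/-- Two distinct vertices are twins: they have the same neighbours apart from
each other. -/
def Twins (G : SimpleGraph V) (u v : V) : Prop :=
  u ≠ v ∧ G.neighborSet u \ {v} = G.neighborSet v \ {u}

/-- The twin equivalence relation: equal or twins. -/
def twinRel (G : SimpleGraph V) (u v : V) : Prop := u = v ∨ Twins G u v

/-- The twin class of a vertex. -/
def twinClass (G : SimpleGraph V) (v : V) : Set V := {u : V | twinRel G v u}

/-- The vertices of the twin graph: twin equivalence classes. -/
def TwinVertex (G : SimpleGraph V) : Type _ := {S : Set V // ∃ v : V, S = twinClass G v}

/-- The twin graph `G*` of `G`: twin classes, two distinct classes being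
adjacent iff (some, equivalently all) representatives are adjacent in `G`. -/
def twinGraph (G : SimpleGraph V) : SimpleGraph (TwinVertex G) where
  Adj A B := A ≠ B ∧ ∃ a ∈ A.1, ∃ b ∈ B.1, G.Adj a b
  symm := ⟨by
    rintro A B ⟨hne, a, ha, b, hb, hab⟩
    exact ⟨hne.symm, b, hb, a, ha, hab.symm⟩⟩
  loopless := ⟨by rintro A ⟨hne, -⟩; exact hne rfl⟩

/-- The twin class of `v`, as a vertex of the twin graph. -/
def cls (G : SimpleGraph V) (v : V) : TwinVertex G := ⟨twinClass G v, v, rfl⟩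

/-- A twin-graph vertex of type (1): a singleton class. -/
def typeOne (G : SimpleGraph V) (A : TwinVertex G) : Prop := ∃ v : V, A.1 = {v}

/-- A twin-graph vertex of type (K): a class with at least two vertices inducing
a complete subgraph. -/
def typeK (G : SimpleGraph V) (A : TwinVertex G) : Prop :=
  A.1.Nontrivial ∧ ∀ a ∈ A.1, ∀ b ∈ A.1, a ≠ b → G.Adj a b

/-- A twin-graph vertex of type (N): a class with at least two vertices inducing
an empty subgraph. -/
def typeN (G : SimpleGraph V) (A : TwinVertex G) : Prop :=
  A.1.Nontrivial ∧ ∀ a ∈ A.1, ∀ b ∈ A.1, ¬ G.Adj a b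

/-- Type (1K): type (1) or type (K). -/
def type1K (G : SimpleGraph V) (A : TwinVertex G) : Prop := typeOne G A ∨ typeK G A

/-- Type (1N): type (1) or type (N). -/
def type1N (G : SimpleGraph V) (A : TwinVertex G) : Prop := typeOne G A ∨ typeN G A

/-- Type (KN): type (K) or type (N). -/
def typeKN (G : SimpleGraph V) (A : TwinVertex G) : Prop := typeK G A ∨ typeN G A

/-- `Γ_i(v)`: the set of vertices at distance `i` from `v`. -/
def Gamma (G : SimpleGraph V) (i : ℕ) (v : V) : Set V := {u : V | G.dist u v = i}

/-- `Γ_i^*(v^*)`: the set of twin-graph vertices at distance `i` from `v^*`. -/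
def GammaStar (G : SimpleGraph V) (i : ℕ) (v : V) : Set (TwinVertex G) :=
  {A : TwinVertex G | (twinGraph G).dist A (cls G v) = i}

/-- `R_1(v)`: neighbours of `v` having a neighbour at distance 2 from `v`. -/
def R1 (G : SimpleGraph V) (v : V) : Set V :=
  {x ∈ Gamma G 1 v | ∃ y ∈ Gamma G 2 v, G.Adj x y}

/-- `R_2(v) = Γ_1(v) \ R_1(v)`. -/
def R2 (G : SimpleGraph V) (v : V) : Set V := Gamma G 1 v \ R1 G v

/-- `R_1^*(v^*)`: twin-graph neighbours of `v^*` having a neighbour in `Γ_2^*(v^*)`. -/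
def R1Star (G : SimpleGraph V) (v : V) : Set (TwinVertex G) :=
  {A ∈ GammaStar G 1 v | ∃ B ∈ GammaStar G 2 v, (twinGraph G).Adj A B}

/-- `R_2^*(v^*) = Γ_1^*(v^*) \ R_1^*(v^*)`. -/
def R2Star (G : SimpleGraph V) (v : V) : Set (TwinVertex G) :=
  GammaStar G 1 v \ R1Star G v

/-- `M_1(x) = Γ_1(v) ∩ Γ_1(x)` (for `x ∈ Γ_1(v)`). -/
def M1 (G : SimpleGraph V) (v x : V) : Set V := Gamma G 1 v ∩ Gamma G 1 x

/-- `M_2(x) = Γ_1(v) ∩ Γ_2(x)` (for `x ∈ Γ_1(v)`). -/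
def M2 (G : SimpleGraph V) (v x : V) : Set V := Gamma G 1 v ∩ Gamma G 2 x

/-- Structure `G_1`: the twin graph is `K_3` and has at most one vertex of type (1K). -/
def structG1 (G : SimpleGraph V) : Prop :=
  ∃ a b c : TwinVertex G, a ≠ b ∧ a ≠ c ∧ b ≠ c ∧
    (∀ X : TwinVertex G, X = a ∨ X = b ∨ X = c) ∧
    (twinGraph G).Adj a b ∧ (twinGraph G).Adj a c ∧ (twinGraph G).Adj b c ∧
    (∀ X Y : TwinVertex G, type1K G X → type1K G Y → X = Y)

/-- Structure `G_2`: the twin graph is the path `P_3` with (a) centre of type (N)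
and some leaf of type (K), or (b) one leaf of type (K) and the other of type (KN). -/
def structG2 (G : SimpleGraph V) : Prop :=
  ∃ a b c : TwinVertex G, a ≠ b ∧ a ≠ c ∧ b ≠ c ∧
    (∀ X : TwinVertex G, X = a ∨ X = b ∨ X = c) ∧
    (twinGraph G).Adj a b ∧ (twinGraph G).Adj b c ∧ ¬ (twinGraph G).Adj a c ∧
    ((typeN G b ∧ (typeK G a ∨ typeK G c)) ∨
     (typeK G a ∧ typeKN G c) ∨ (typeK G c ∧ typeKN G a))

/-- Structure `G_3`: the twin graph is the paw, the triangle being `u, p, q` with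
the pendant vertex `l` attached to `u`; `p` is of type (N), `q` of type (1K),
`l` of type (1N); and if `q` is of type (K) then neither `l` nor `u` is of type (N). -/
def structG3 (G : SimpleGraph V) : Prop :=
  ∃ u p q l : TwinVertex G,
    u ≠ p ∧ u ≠ q ∧ u ≠ l ∧ p ≠ q ∧ p ≠ l ∧ q ≠ l ∧
    (∀ X : TwinVertex G, X = u ∨ X = p ∨ X = q ∨ X = l) ∧
    (twinGraph G).Adj u p ∧ (twinGraph G).Adj u q ∧ (twinGraph G).Adj p q ∧
    (twinGraph G).Adj u l ∧ ¬ (twinGraph G).Adj p l ∧ ¬ (twinGraph G).Adj q l ∧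
    typeN G p ∧ type1K G q ∧ type1N G l ∧
    (typeK G q → ¬ typeN G l ∧ ¬ typeN G u)

/-- Structure `G_4`: the twin graph is the cycle `C_5` and every vertex is of type (1). -/
def structG4 (G : SimpleGraph V) : Prop :=
  ∃ v0 v1 v2 v3 v4 : TwinVertex G,
    v0 ≠ v1 ∧ v0 ≠ v2 ∧ v0 ≠ v3 ∧ v0 ≠ v4 ∧ v1 ≠ v2 ∧ v1 ≠ v3 ∧ v1 ≠ v4 ∧
    v2 ≠ v3 ∧ v2 ≠ v4 ∧ v3 ≠ v4 ∧
    (∀ X : TwinVertex G, X = v0 ∨ X = v1 ∨ X = v2 ∨ X = v3 ∨ X = v4) ∧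
    (twinGraph G).Adj v0 v1 ∧ (twinGraph G).Adj v1 v2 ∧ (twinGraph G).Adj v2 v3 ∧
    (twinGraph G).Adj v3 v4 ∧ (twinGraph G).Adj v4 v0 ∧
    ¬ (twinGraph G).Adj v0 v2 ∧ ¬ (twinGraph G).Adj v1 v3 ∧ ¬ (twinGraph G).Adj v2 v4 ∧
    ¬ (twinGraph G).Adj v3 v0 ∧ ¬ (twinGraph G).Adj v4 v1 ∧
    (∀ X : TwinVertex G, typeOne G X)

/-- Structure `G_5`: the twin graph is `C_5` with one chord (cycle `v0 v1 v2 v3 v4`,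
chord `v0 v2`); the two adjacent degree-2 vertices `v3, v4` are of type (1), the
other vertices of type (1K). -/
def structG5 (G : SimpleGraph V) : Prop :=
  ∃ v0 v1 v2 v3 v4 : TwinVertex G,
    v0 ≠ v1 ∧ v0 ≠ v2 ∧ v0 ≠ v3 ∧ v0 ≠ v4 ∧ v1 ≠ v2 ∧ v1 ≠ v3 ∧ v1 ≠ v4 ∧
    v2 ≠ v3 ∧ v2 ≠ v4 ∧ v3 ≠ v4 ∧
    (∀ X : TwinVertex G, X = v0 ∨ X = v1 ∨ X = v2 ∨ X = v3 ∨ X = v4) ∧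
    (twinGraph G).Adj v0 v1 ∧ (twinGraph G).Adj v1 v2 ∧ (twinGraph G).Adj v2 v3 ∧
    (twinGraph G).Adj v3 v4 ∧ (twinGraph G).Adj v4 v0 ∧ (twinGraph G).Adj v0 v2 ∧
    ¬ (twinGraph G).Adj v1 v3 ∧ ¬ (twinGraph G).Adj v1 v4 ∧ ¬ (twinGraph G).Adj v2 v4 ∧
    typeOne G v3 ∧ typeOne G v4 ∧ type1K G v0 ∧ type1K G v1 ∧ type1K G v2

/-- Structure `G_6`: the twin graph is `C_5` with two adjacent chords (cycle
`v0 v1 v2 v3 v4`, chords `v0 v2` and `v0 v3`, so `v0` has degree 4); `v0` is of any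
type, the other vertices of type (1K); no two non-adjacent vertices are both of
type (K), and no two adjacent vertices have the different types (K) and (N). -/
def structG6 (G : SimpleGraph V) : Prop :=
  ∃ v0 v1 v2 v3 v4 : TwinVertex G,
    v0 ≠ v1 ∧ v0 ≠ v2 ∧ v0 ≠ v3 ∧ v0 ≠ v4 ∧ v1 ≠ v2 ∧ v1 ≠ v3 ∧ v1 ≠ v4 ∧
    v2 ≠ v3 ∧ v2 ≠ v4 ∧ v3 ≠ v4 ∧
    (∀ X : TwinVertex G, X = v0 ∨ X = v1 ∨ X = v2 ∨ X = v3 ∨ X = v4) ∧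
    (twinGraph G).Adj v0 v1 ∧ (twinGraph G).Adj v1 v2 ∧ (twinGraph G).Adj v2 v3 ∧
    (twinGraph G).Adj v3 v4 ∧ (twinGraph G).Adj v4 v0 ∧ (twinGraph G).Adj v0 v2 ∧
    (twinGraph G).Adj v0 v3 ∧
    ¬ (twinGraph G).Adj v1 v3 ∧ ¬ (twinGraph G).Adj v1 v4 ∧ ¬ (twinGraph G).Adj v2 v4 ∧
    type1K G v1 ∧ type1K G v2 ∧ type1K G v3 ∧ type1K G v4 ∧
    (∀ X Y : TwinVertex G, X ≠ Y → ¬ (twinGraph G).Adj X Y →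
      ¬ (typeK G X ∧ typeK G Y)) ∧
    (∀ X Y : TwinVertex G, (twinGraph G).Adj X Y → ¬ (typeK G X ∧ typeN G Y))

/-- Structure `G_7`: the twin graph is the kite (`K_4` minus an edge, vertices
`a, b` of degree 3 in the kite and `c, d` the non-adjacent pair) with a pendant
vertex `l` attached to the degree-3 vertex `a`; `l` is of type (1), `a` and `b`
are of type (1K), one of `c, d` is of type (K) and the other of type (1). -/
def structG7 (G : SimpleGraph V) : Prop :=
  ∃ a b c d l : TwinVertex G,
    a ≠ b ∧ a ≠ c ∧ a ≠ d ∧ a ≠ l ∧ b ≠ c ∧ b ≠ d ∧ b ≠ l ∧ c ≠ d ∧ c ≠ l ∧ d ≠ l ∧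
    (∀ X : TwinVertex G, X = a ∨ X = b ∨ X = c ∨ X = d ∨ X = l) ∧
    (twinGraph G).Adj a b ∧ (twinGraph G).Adj a c ∧ (twinGraph G).Adj a d ∧
    (twinGraph G).Adj b c ∧ (twinGraph G).Adj b d ∧ (twinGraph G).Adj a l ∧
    ¬ (twinGraph G).Adj c d ∧ ¬ (twinGraph G).Adj b l ∧ ¬ (twinGraph G).Adj c l ∧
    ¬ (twinGraph G).Adj d l ∧
    typeOne G l ∧ type1K G a ∧ type1K G b ∧ typeK G c ∧ typeOne G d

/-- Structure `G_8`: the twin graph is the kite (`K_4` minus an edge, `a, b` of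
degree 3 and `c, d` the non-adjacent degree-2 pair); one degree-2 vertex `c` is of
type (K) and the other `d` of type (1); one degree-3 vertex `a` is of type (N)
and the other `b` of type (1K). -/
def structG8 (G : SimpleGraph V) : Prop :=
  ∃ a b c d : TwinVertex G,
    a ≠ b ∧ a ≠ c ∧ a ≠ d ∧ b ≠ c ∧ b ≠ d ∧ c ≠ d ∧
    (∀ X : TwinVertex G, X = a ∨ X = b ∨ X = c ∨ X = d) ∧
    (twinGraph G).Adj a b ∧ (twinGraph G).Adj a c ∧ (twinGraph G).Adj a d ∧
    (twinGraph G).Adj b c ∧ (twinGraph G).Adj b d ∧ ¬ (twinGraph G).Adj c d ∧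
    typeN G a ∧ type1K G b ∧ typeK G c ∧ typeOne G d

/-- Structure `G_9`: the twin graph is `C_4`, two adjacent vertices of type (K)
and the other two of type (1). -/
def structG9 (G : SimpleGraph V) : Prop :=
  ∃ v0 v1 v2 v3 : TwinVertex G,
    v0 ≠ v1 ∧ v0 ≠ v2 ∧ v0 ≠ v3 ∧ v1 ≠ v2 ∧ v1 ≠ v3 ∧ v2 ≠ v3 ∧
    (∀ X : TwinVertex G, X = v0 ∨ X = v1 ∨ X = v2 ∨ X = v3) ∧
    (twinGraph G).Adj v0 v1 ∧ (twinGraph G).Adj v1 v2 ∧ (twinGraph G).Adj v2 v3 ∧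
    (twinGraph G).Adj v3 v0 ∧ ¬ (twinGraph G).Adj v0 v2 ∧ ¬ (twinGraph G).Adj v1 v3 ∧
    typeK G v0 ∧ typeK G v1 ∧ typeOne G v2 ∧ typeOne G v3

/-- Structure `G_10`: the twin graph is the wheel `C_4 ∨ K_1` (hub `h`, rim
`v0 v1 v2 v3`); two adjacent rim (degree-3) vertices `v0, v1` are of type (K), the
hub is of type (1K), and the other vertices of type (1). -/
def structG10 (G : SimpleGraph V) : Prop :=
  ∃ h v0 v1 v2 v3 : TwinVertex G,
    h ≠ v0 ∧ h ≠ v1 ∧ h ≠ v2 ∧ h ≠ v3 ∧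
    v0 ≠ v1 ∧ v0 ≠ v2 ∧ v0 ≠ v3 ∧ v1 ≠ v2 ∧ v1 ≠ v3 ∧ v2 ≠ v3 ∧
    (∀ X : TwinVertex G, X = h ∨ X = v0 ∨ X = v1 ∨ X = v2 ∨ X = v3) ∧
    (twinGraph G).Adj h v0 ∧ (twinGraph G).Adj h v1 ∧ (twinGraph G).Adj h v2 ∧
    (twinGraph G).Adj h v3 ∧
    (twinGraph G).Adj v0 v1 ∧ (twinGraph G).Adj v1 v2 ∧ (twinGraph G).Adj v2 v3 ∧
    (twinGraph G).Adj v3 v0 ∧ ¬ (twinGraph G).Adj v0 v2 ∧ ¬ (twinGraph G).Adj v1 v3 ∧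
    typeK G v0 ∧ typeK G v1 ∧ type1K G h ∧ typeOne G v2 ∧ typeOne G v3


section Helpers

variable {G : SimpleGraph V}

lemma twins_iff {u v : V} :
    Twins G u v ↔ u ≠ v ∧ ∀ x, x ≠ u → x ≠ v → (G.Adj u x ↔ G.Adj v x) := by
  constructor
  · rintro ⟨hne, hset⟩
    refine ⟨hne, fun x hxu hxv => ?_⟩
    have := Set.ext_iff.mp hset x
    simpa [SimpleGraph.mem_neighborSet, hxu, hxv] using this
  · rintro ⟨hne, h⟩
    refine ⟨hne, ?_⟩
    ext x
    simp only [Set.mem_diff, SimpleGraph.mem_neighborSet, Set.mem_singleton_iff]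
    constructor
    · rintro ⟨hadj, hxv⟩
      have hxu : x ≠ u := fun h' => G.loopless.irrefl u (h' ▸ hadj)
      exact ⟨(h x hxu hxv).mp hadj, hxu⟩
    · rintro ⟨hadj, hxu⟩
      have hxv : x ≠ v := fun h' => G.loopless.irrefl v (h' ▸ hadj)
      exact ⟨(h x hxu hxv).mpr hadj, hxv⟩

lemma twins_trans {u v w : V} (h1 : Twins G u v) (h2 : Twins G v w) (huw : u ≠ w) :
    Twins G u w := by
  rw [twins_iff] at h1 h2 ⊢
  obtain ⟨huv, h1⟩ := h1
  obtain ⟨hvw, h2⟩ := h2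
  refine ⟨huw, fun x hxu hxw => ?_⟩
  by_cases hxv : x = v
  · subst hxv
    have e1 : G.Adj u w ↔ G.Adj x w := h1 w (Ne.symm huw) (Ne.symm hvw)
    have e2 : G.Adj x u ↔ G.Adj w u := h2 u huv huw
    constructor
    · intro h
      exact ((e1.mp ((e2.mp h.symm).symm)).symm)
    · intro h
      exact ((e2.mpr ((e1.mpr h.symm).symm)).symm)
  · exact (h1 x hxu hxv).trans (h2 x hxv hxw)

lemma twinRel_refl (u : V) : twinRel G u u := Or.inl rfl

lemma twinRel_symm {u v : V} (h : twinRel G u v) : twinRel G v u :=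
  h.elim (fun h => Or.inl h.symm) (fun h => Or.inr ⟨h.1.symm, h.2.symm⟩)

lemma twinRel_trans {u v w : V} (h1 : twinRel G u v) (h2 : twinRel G v w) :
    twinRel G u w := by
  rcases h1 with rfl | h1
  · exact h2
  rcases h2 with rfl | h2
  · exact Or.inr h1
  by_cases huw : u = w
  · exact Or.inl huw
  · exact Or.inr (twins_trans h1 h2 huw)

lemma twinClass_eq_of_rel {u v : V} (h : twinRel G u v) :
    twinClass G u = twinClass G v := by
  ext x
  exact ⟨fun hx => twinRel_trans (twinRel_symm h) hx, fun hx => twinRel_trans h hx⟩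

lemma mem_cls (x : V) : x ∈ (cls G x).1 := twinRel_refl x

lemma eq_cls_of_mem {A : TwinVertex G} {x : V} (hx : x ∈ A.1) : A = cls G x := by
  apply Subtype.ext
  obtain ⟨v, hv⟩ := A.2
  rw [hv] at hx ⊢
  exact twinClass_eq_of_rel hx

lemma adj_of_cls_ne (hcomp : ∀ A B : TwinVertex G, A ≠ B → (twinGraph G).Adj A B)
    {u v : V} (h : cls G u ≠ cls G v) : G.Adj u v := by
  obtain ⟨-, a, ha, b, hb, hab⟩ := hcomp _ _ h
  have key : ∀ x y : V, x ∈ (cls G u).1 → y ∈ (cls G v).1 → x ≠ y := by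
    intro x y hx hy hxy
    exact h ((eq_cls_of_mem hx).trans ((congrArg (cls G) hxy).trans (eq_cls_of_mem hy).symm))
  have hab' : a ≠ b := key a b ha hb
  have hub : u ≠ b := key u b (mem_cls u) hb
  have huv : u ≠ v := key u v (mem_cls u) (mem_cls v)
  have step1 : G.Adj u b := by
    rcases (ha : twinRel G u a) with rfl | ha
    · exact hab
    · exact ((twins_iff.mp ha).2 b (Ne.symm hub) (Ne.symm hab')).mpr hab
  rcases (hb : twinRel G v b) with rfl | hb
  · exact step1
  · exact (((twins_iff.mp hb).2 u huv hub).mpr step1.symm).symm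

lemma class_hom (v : V) :
    (∀ a ∈ twinClass G v, ∀ b ∈ twinClass G v, a ≠ b → G.Adj a b) ∨
    (∀ a ∈ twinClass G v, ∀ b ∈ twinClass G v, ¬ G.Adj a b) := by
  by_cases h : ∃ a ∈ twinClass G v, ∃ b ∈ twinClass G v, G.Adj a b
  · obtain ⟨a, ha, b, hb, hab⟩ := h
    left
    have rel : ∀ x ∈ twinClass G v, ∀ y ∈ twinClass G v, twinRel G x y :=
      fun x hx y hy => twinRel_trans (twinRel_symm hx) hy
    intro c hc d hd hcd
    have hab' : a ≠ b := G.ne_of_adj hab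
    have step : ∃ e, e ∈ twinClass G v ∧ e ≠ c ∧ G.Adj c e := by
      by_cases hca : c = a
      · exact ⟨b, hb, by rw [hca]; exact hab'.symm, hca ▸ hab⟩
      by_cases hcb : c = b
      · exact ⟨a, ha, by rw [hcb]; exact hab', hcb ▸ hab.symm⟩
      rcases rel a ha c hc with rfl | tw
      · exact absurd rfl hca
      · exact ⟨b, hb, Ne.symm hcb,
          ((twins_iff.mp tw).2 b (Ne.symm hab') (Ne.symm hcb)).mp hab⟩
    obtain ⟨e, he, hec, hce⟩ := step
    by_cases hde : d = e
    · exact hde ▸ hce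
    rcases rel e he d hd with rfl | tw
    · exact absurd rfl hde
    · exact (((twins_iff.mp tw).2 c (Ne.symm hec) hcd).mp hce.symm).symm
  · right
    push_neg at h
    exact h

lemma universal_of_type1K (hcomp : ∀ A B : TwinVertex G, A ≠ B → (twinGraph G).Adj A B)
    {A : TwinVertex G} (hA : type1K G A) {u : V} (hu : u ∈ A.1) :
    ∀ x, x ≠ u → G.Adj u x := by
  intro x hxu
  by_cases hx : x ∈ A.1
  · rcases hA with ⟨w, hw⟩ | ⟨-, hK⟩
    · rw [hw, Set.mem_singleton_iff] at hu hx
      exact absurd (hx.trans hu.symm) hxu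
    · exact hK u hu x hx (Ne.symm hxu)
  · apply adj_of_cls_ne hcomp
    intro hclash
    apply hx
    have : A = cls G x := (eq_cls_of_mem hu).trans hclash
    rw [this]
    exact mem_cls x

lemma type1K_unique' (hcomp : ∀ A B : TwinVertex G, A ≠ B → (twinGraph G).Adj A B)
    {A B : TwinVertex G} (hA : type1K G A) (hB : type1K G B) : A = B := by
  by_contra hne
  obtain ⟨a, ha⟩ := A.2
  obtain ⟨b, hb⟩ := B.2
  have haA : a ∈ A.1 := by rw [ha]; exact twinRel_refl a
  have hbB : b ∈ B.1 := by rw [hb]; exact twinRel_refl b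
  have hab : a ≠ b := by
    intro h
    exact hne ((eq_cls_of_mem haA).trans ((congrArg (cls G) h).trans (eq_cls_of_mem hbB).symm))
  have ua := universal_of_type1K hcomp hA haA
  have ub := universal_of_type1K hcomp hB hbB
  have tw : Twins G a b := twins_iff.mpr ⟨hab, fun x hxa hxb =>
    ⟨fun _ => ub x hxb, fun _ => ua x hxa⟩⟩
  have hcc : cls G a = cls G b := Subtype.ext (twinClass_eq_of_rel (Or.inr tw))
  exact hne ((eq_cls_of_mem haA).trans (hcc.trans (eq_cls_of_mem hbB).symm))

end Helpers

/-- If `G` is connected of order `n` with diameter 2 and `β(G) = n - 3`, and the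
twin graph `G*` has diameter 1 (i.e. is complete), then `G* ≅ K_3` (it is a
complete graph on 3 vertices) and it has at most one vertex of type (1K). -/
theorem twinGraph_complete_case
    {V : Type*} [Fintype V] (G : SimpleGraph V)
    (hdiam : diamEq G 2)
    (hbeta : metricDim G = Fintype.card V - 3)
    (hstar : diamEq (twinGraph G) 1) :
    Nat.card (TwinVertex G) = 3 ∧
      (∀ A B : TwinVertex G, A ≠ B → (twinGraph G).Adj A B) ∧
      (∀ A B : TwinVertex G, type1K G A → type1K G B → A = B) := by
  classical
  obtain ⟨hconn, hle2, u2, v2, hd2⟩ := hdiam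
  obtain ⟨hconn1, hle1, P0, Q0, hd1⟩ := hstar
  haveI hFinTV : Finite (TwinVertex G) :=
    (Subtype.finite : Finite {S : Set V // ∃ v : V, S = twinClass G v})
  -- the twin graph is complete
  have hcomp : ∀ A B : TwinVertex G, A ≠ B → (twinGraph G).Adj A B := by
    intro A B hne
    have hpos : 0 < (twinGraph G).dist A B := hconn1.pos_dist_of_ne hne
    have h1 : (twinGraph G).dist A B = 1 := le_antisymm (hle1 A B) hpos
    exact SimpleGraph.dist_eq_one_iff_adj.mp h1
  -- surjectivity of cls, so K ≤ n
  have hsurj : Function.Surjective (cls G : V → TwinVertex G) := by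
    intro A
    obtain ⟨v, hv⟩ := A.2
    exact ⟨v, Subtype.ext hv.symm⟩
  have hKn : Nat.card (TwinVertex G) ≤ Fintype.card V := by
    have h := Nat.card_le_card_of_surjective _ hsurj
    simpa using h
  -- a pair at distance 2: same class, nonadjacent
  have hu2v2 : u2 ≠ v2 := by
    rintro rfl
    simp [SimpleGraph.dist_self] at hd2
  have hnadj : ¬ G.Adj u2 v2 := by
    intro h
    have := SimpleGraph.dist_eq_one_iff_adj.mpr h
    omega
  have hsame : cls G u2 = cls G v2 := by
    by_contra h
    exact hnadj (adj_of_cls_ne hcomp h)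
  have hv2mem : v2 ∈ (cls G u2).1 := by rw [hsame]; exact mem_cls v2
  -- any class that is not of type (1K) is of type (N)
  have hNotK : ∀ A : TwinVertex G, ¬ type1K G A → typeN G A := by
    intro A hA
    obtain ⟨a, ha⟩ := A.2
    have haA : a ∈ A.1 := by rw [ha]; exact twinRel_refl a
    have hnt : A.1.Nontrivial := by
      by_contra h
      rw [Set.not_nontrivial_iff] at h
      exact hA (Or.inl ⟨a, Set.eq_singleton_iff_unique_mem.mpr ⟨haA, fun x hx => h hx haA⟩⟩)
    refine ⟨hnt, ?_⟩
    rcases class_hom (G := G) a with hK | hN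
    · exact absurd (Or.inr ⟨hnt, ha ▸ hK⟩) hA
    · rw [ha]; exact hN
  -- representatives of classes
  have hrepex : ∀ A : TwinVertex G, ∃ v : V, A.1 = twinClass G v := fun A => A.2
  set rep : TwinVertex G → V := fun A => (hrepex A).choose with hrepdef
  have hrep : ∀ A : TwinVertex G, A.1 = twinClass G (rep A) := fun A => (hrepex A).choose_spec
  have hrepmem : ∀ A, rep A ∈ A.1 := fun A => by rw [hrep A]; exact twinRel_refl _
  have hrepcls : ∀ A, cls G (rep A) = A := fun A => (eq_cls_of_mem (hrepmem A)).symm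
  have hrepinj : Function.Injective rep := fun A B h => by
    rw [← hrepcls A, ← hrepcls B, h]
  set W : Set V := (Set.range rep)ᶜ with hW
  have hrangecard : (Set.range rep).ncard = Nat.card (TwinVertex G) := by
    rw [← Nat.card_coe_set_eq, Nat.card_range_of_injective hrepinj]
  have hWcard : W.ncard = Fintype.card V - Nat.card (TwinVertex G) := by
    have h1 := Set.ncard_add_ncard_compl (Set.range rep)
    rw [Nat.card_eq_fintype_card, ← hW] at h1
    omega
  -- W resolves G
  have hres : Resolves G W := by
    intro x y hxy
    by_cases hxW : x ∈ W
    · refine ⟨x, hxW, ?_⟩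
      rw [SimpleGraph.dist_self]
      exact (hconn.pos_dist_of_ne (Ne.symm hxy)).ne
    by_cases hyW : y ∈ W
    · refine ⟨y, hyW, ?_⟩
      rw [SimpleGraph.dist_self]
      exact (hconn.pos_dist_of_ne hxy).ne'
    simp only [hW, Set.mem_compl_iff, not_not, Set.mem_range] at hxW hyW
    obtain ⟨A, rfl⟩ := hxW
    obtain ⟨B, rfl⟩ := hyW
    have hAB : A ≠ B := fun h => hxy (by rw [h])
    have main : ∀ C D : TwinVertex G, C ≠ D → ¬ type1K G C →
        ∃ w ∈ W, G.dist (rep C) w ≠ G.dist (rep D) w := by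
      intro C D hCD hC
      obtain ⟨hnt, hN⟩ := hNotK C hC
      obtain ⟨w, hwC, hwne⟩ : ∃ w ∈ C.1, w ≠ rep C := by
        obtain ⟨x, hx, y, hy, hxy'⟩ := hnt
        by_cases hxr : x = rep C
        · exact ⟨y, hy, by rw [← hxr]; exact hxy'.symm⟩
        · exact ⟨x, hx, hxr⟩
      have hwW : w ∈ W := by
        simp only [hW, Set.mem_compl_iff, Set.mem_range]
        rintro ⟨E, rfl⟩
        have hEC : C = E := by
          have h1 := eq_cls_of_mem hwC
          rwa [hrepcls E] at h1
        exact hwne (by rw [hEC])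
      have hdD : G.dist (rep D) w = 1 := by
        apply SimpleGraph.dist_eq_one_iff_adj.mpr
        apply adj_of_cls_ne hcomp
        rw [hrepcls D]
        intro h
        exact hCD ((eq_cls_of_mem hwC).trans h.symm)
      have hdC : G.dist (rep C) w = 2 := by
        have h0 : G.dist (rep C) w ≠ 0 := (hconn.pos_dist_of_ne (Ne.symm hwne)).ne'
        have h1 : G.dist (rep C) w ≠ 1 := fun h =>
          hN (rep C) (hrepmem C) w hwC (SimpleGraph.dist_eq_one_iff_adj.mp h)
        have h2 := hle2 (rep C) w
        omega
      exact ⟨w, hwW, by rw [hdC, hdD]; omega⟩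
    by_cases hA1 : type1K G A
    · have hB1 : ¬ type1K G B := fun hB1 => hAB (type1K_unique' hcomp hA1 hB1)
      obtain ⟨w, hwW, hw⟩ := main B A (Ne.symm hAB) hB1
      exact ⟨w, hwW, hw.symm⟩
    · exact main A B hAB hA1
  -- lower bound
  have hlow : ∀ m ∈ {k : ℕ | ∃ W : Set V, Resolves G W ∧ W.ncard = k},
      Fintype.card V - Nat.card (TwinVertex G) ≤ m := by
    rintro m ⟨W', hres', rfl⟩
    have hinj : Set.InjOn (cls G) W'ᶜ := by
      intro x hx y hy hcls
      by_contra hxy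
      obtain ⟨w, hwW, hdw⟩ := hres' x y hxy
      have hwx : w ≠ x := fun h => hx (h ▸ hwW)
      have hwy : w ≠ y := fun h => hy (h ▸ hwW)
      have htw : twinRel G x y := by
        have hval : twinClass G x = twinClass G y := congrArg Subtype.val hcls
        have : y ∈ twinClass G x := by rw [hval]; exact twinRel_refl y
        exact this
      rcases htw with rfl | htw
      · exact hxy rfl
      have hiff := (twins_iff.mp htw).2 w hwx hwy
      apply hdw
      have h0x : G.dist x w ≠ 0 := (hconn.pos_dist_of_ne (Ne.symm hwx)).ne'
      have h0y : G.dist y w ≠ 0 := (hconn.pos_dist_of_ne (Ne.symm hwy)).ne'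
      have h2x := hle2 x w
      have h2y := hle2 y w
      by_cases hadj : G.Adj x w
      · rw [SimpleGraph.dist_eq_one_iff_adj.mpr hadj,
          SimpleGraph.dist_eq_one_iff_adj.mpr (hiff.mp hadj)]
      · have h1x : G.dist x w ≠ 1 := fun h =>
          hadj (SimpleGraph.dist_eq_one_iff_adj.mp h)
        have h1y : G.dist y w ≠ 1 := fun h =>
          hadj (hiff.mpr (SimpleGraph.dist_eq_one_iff_adj.mp h))
        omega
    have h1 : (W'ᶜ).ncard ≤ Nat.card (TwinVertex G) := by
      calc (W'ᶜ).ncard = (cls G '' W'ᶜ).ncard := (Set.ncard_image_of_injOn hinj).symm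
        _ ≤ (Set.univ : Set (TwinVertex G)).ncard :=
            Set.ncard_le_ncard (Set.subset_univ _) Set.finite_univ
        _ = Nat.card (TwinVertex G) := Set.ncard_univ _
    have h2 := Set.ncard_add_ncard_compl W'
    rw [Nat.card_eq_fintype_card] at h2
    omega
  have hMD : metricDim G = Fintype.card V - Nat.card (TwinVertex G) := by
    have hmem : Fintype.card V - Nat.card (TwinVertex G) ∈
        {k : ℕ | ∃ W : Set V, Resolves G W ∧ W.ncard = k} := ⟨W, hres, hWcard⟩
    exact le_antisymm (Nat.sInf_le hmem) (le_csInf ⟨_, hmem⟩ hlow)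
  -- n ≥ 3
  have hPQ : P0 ≠ Q0 := by
    rintro rfl
    simp [SimpleGraph.dist_self] at hd1
  obtain ⟨C, hCP⟩ : ∃ C : TwinVertex G, C ≠ cls G u2 := by
    by_cases h : P0 = cls G u2
    · exact ⟨Q0, fun hq => hPQ (h.trans hq.symm)⟩
    · exact ⟨P0, h⟩
  have hc1 : rep C ≠ u2 := by
    intro h
    apply hCP
    rw [← hrepcls C, h]
  have hc2 : rep C ≠ v2 := by
    intro h
    apply hCP
    rw [← hrepcls C, h, ← hsame]
  have hn3 : 3 ≤ Fintype.card V := by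
    have h3 : ({u2, v2, rep C} : Finset V).card = 3 :=
      Finset.card_eq_three.mpr ⟨u2, v2, rep C, hu2v2, Ne.symm hc1, Ne.symm hc2, rfl⟩
    calc 3 = ({u2, v2, rep C} : Finset V).card := h3.symm
      _ ≤ Finset.univ.card := Finset.card_le_univ _
      _ = Fintype.card V := rfl
  refine ⟨?_, hcomp, fun A B hA hB => type1K_unique' hcomp hA hB⟩
  rw [hMD] at hbeta
  omega

end PaperMetricDim
end

section
/- Let G be a connected simple graph of order n with diam(G) = 2 and β(G) = n − 3, with twin graph G*. Assume that for every vertex w of G with Γ_2^*(w^*) ≠ ∅, the set Γ_1(w) is not homogeneous, and let v be a fixed vertex with Γ_2^*(v^*) ≠ ∅ (so Γ_2(v) is homogeneous). If for every vertex u ∈ R_2(v) the set M_2(u) is empty and R_1(v) is homogeneous, then G* satisfies the structure G_2. Structure G_2: G* ≅ P_3 and either (a) the degree-2 vertex is of type (N), one leaf is of type (K) and the other leaf is of any type, or (b) one leaf is of type (K), the other leaf is of type (KN), and the degree-2 vertex is of any type. -/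
namespace PaperMetricDim

open SimpleGraph

variable {V : Type*}

lemma four_contra [Fintype V] (G : SimpleGraph V)
    (hc : G.Connected)
    (hbeta : metricDim G = Fintype.card V - 3)
    (d1 d2 d3 d4 : V)
    (n12 : d1 ≠ d2) (n13 : d1 ≠ d3) (n14 : d1 ≠ d4)
    (n23 : d2 ≠ d3) (n24 : d2 ≠ d4) (n34 : d3 ≠ d4)
    (r12 : ∃ w, w ≠ d1 ∧ w ≠ d2 ∧ w ≠ d3 ∧ w ≠ d4 ∧ G.dist d1 w ≠ G.dist d2 w)
    (r13 : ∃ w, w ≠ d1 ∧ w ≠ d2 ∧ w ≠ d3 ∧ w ≠ d4 ∧ G.dist d1 w ≠ G.dist d3 w)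
    (r14 : ∃ w, w ≠ d1 ∧ w ≠ d2 ∧ w ≠ d3 ∧ w ≠ d4 ∧ G.dist d1 w ≠ G.dist d4 w)
    (r23 : ∃ w, w ≠ d1 ∧ w ≠ d2 ∧ w ≠ d3 ∧ w ≠ d4 ∧ G.dist d2 w ≠ G.dist d3 w)
    (r24 : ∃ w, w ≠ d1 ∧ w ≠ d2 ∧ w ≠ d3 ∧ w ≠ d4 ∧ G.dist d2 w ≠ G.dist d4 w)
    (r34 : ∃ w, w ≠ d1 ∧ w ≠ d2 ∧ w ≠ d3 ∧ w ≠ d4 ∧ G.dist d3 w ≠ G.dist d4 w) :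
    False := by
  classical
  set D : Set V := {d1, d2, d3, d4} with hD
  have hDcard : D.ncard = 4 := by
    rw [hD]
    rw [Set.ncard_insert_of_notMem (by simp [n12, n13, n14]) (Set.toFinite _),
        Set.ncard_insert_of_notMem (by simp [n23, n24]) (Set.toFinite _),
        Set.ncard_insert_of_notMem (by simp [n34]) (Set.toFinite _),
        Set.ncard_singleton]
  have key : ∀ w, w ≠ d1 → w ≠ d2 → w ≠ d3 → w ≠ d4 → w ∈ Set.univ \ D := by
    intro w h1 h2 h3 h4
    refine ⟨Set.mem_univ w, ?_⟩
    simp [hD, h1, h2, h3, h4]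
  have hres : Resolves G (Set.univ \ D) := by
    intro u u' hne
    by_cases hu : u ∈ D
    · by_cases hu' : u' ∈ D
      · simp only [hD, Set.mem_insert_iff, Set.mem_singleton_iff] at hu hu'
        rcases hu with rfl | rfl | rfl | rfl <;> rcases hu' with rfl | rfl | rfl | rfl <;>
          first
            | exact absurd rfl hne
            | (obtain ⟨w, h1, h2, h3, h4, hw⟩ := r12; exact ⟨w, key w h1 h2 h3 h4, hw⟩)
            | (obtain ⟨w, h1, h2, h3, h4, hw⟩ := r12; exact ⟨w, key w h1 h2 h3 h4, hw.symm⟩)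
            | (obtain ⟨w, h1, h2, h3, h4, hw⟩ := r13; exact ⟨w, key w h1 h2 h3 h4, hw⟩)
            | (obtain ⟨w, h1, h2, h3, h4, hw⟩ := r13; exact ⟨w, key w h1 h2 h3 h4, hw.symm⟩)
            | (obtain ⟨w, h1, h2, h3, h4, hw⟩ := r14; exact ⟨w, key w h1 h2 h3 h4, hw⟩)
            | (obtain ⟨w, h1, h2, h3, h4, hw⟩ := r14; exact ⟨w, key w h1 h2 h3 h4, hw.symm⟩)
            | (obtain ⟨w, h1, h2, h3, h4, hw⟩ := r23; exact ⟨w, key w h1 h2 h3 h4, hw⟩)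
            | (obtain ⟨w, h1, h2, h3, h4, hw⟩ := r23; exact ⟨w, key w h1 h2 h3 h4, hw.symm⟩)
            | (obtain ⟨w, h1, h2, h3, h4, hw⟩ := r24; exact ⟨w, key w h1 h2 h3 h4, hw⟩)
            | (obtain ⟨w, h1, h2, h3, h4, hw⟩ := r24; exact ⟨w, key w h1 h2 h3 h4, hw.symm⟩)
            | (obtain ⟨w, h1, h2, h3, h4, hw⟩ := r34; exact ⟨w, key w h1 h2 h3 h4, hw⟩)
            | (obtain ⟨w, h1, h2, h3, h4, hw⟩ := r34; exact ⟨w, key w h1 h2 h3 h4, hw.symm⟩)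
      · refine ⟨u', ⟨Set.mem_univ _, hu'⟩, ?_⟩
        have h0 : G.dist u' u' = 0 := SimpleGraph.dist_self
        have h1 : G.dist u u' ≠ 0 := fun h => hne (hc.dist_eq_zero_iff.mp h)
        omega
    · refine ⟨u, ⟨Set.mem_univ _, hu⟩, ?_⟩
      have h0 : G.dist u u = 0 := SimpleGraph.dist_self
      have h1 : G.dist u' u ≠ 0 := fun h => hne (hc.dist_eq_zero_iff.mp h).symm
      omega
  have hWcard : (Set.univ \ D).ncard = Fintype.card V - 4 := by
    rw [Set.ncard_diff (Set.subset_univ D), Set.ncard_univ, Nat.card_eq_fintype_card, hDcard]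
  have hle : metricDim G ≤ Fintype.card V - 4 :=
    Nat.sInf_le ⟨Set.univ \ D, hres, hWcard⟩
  have h4n : 4 ≤ Fintype.card V := by
    have := Set.ncard_le_ncard (Set.subset_univ D) (Set.toFinite _)
    rw [Set.ncard_univ, Nat.card_eq_fintype_card, hDcard] at this
    exact this
  omega

lemma triple_of_not_homog (G : SimpleGraph V) {S : Set V} (h : ¬ Homogeneous G S) :
    ∃ p q r, p ∈ S ∧ q ∈ S ∧ r ∈ S ∧ p ≠ r ∧ q ≠ r ∧ G.Adj p q ∧ ¬ G.Adj p r := by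
  rw [Homogeneous] at h
  push_neg at h
  obtain ⟨⟨c, hc, d, hd, hcd, hncd⟩, a, ha, b, hb, hab⟩ := h
  by_cases hac : a = c
  · subst hac
    exact ⟨a, b, d, ha, hb, hd, hcd, fun h => hncd (h ▸ hab), hab, hncd⟩
  · by_cases had : a = d
    · subst had
      refine ⟨a, b, c, ha, hb, hc, fun h => hcd h.symm,
        fun h => (hncd ((h ▸ hab : G.Adj a c).symm)), hab, fun h => hncd h.symm⟩
    · by_cases h2 : G.Adj a c
      · exact ⟨c, a, d, hc, ha, hd, hcd, had, h2.symm, hncd⟩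
      · exact ⟨a, b, c, ha, hb, hc, hac, fun h => h2 (h ▸ hab), hab, h2⟩


/-- Suppose `G` is connected of order `n`, `diam(G) = 2`, `β(G) = n - 3`, for
every vertex `w` with `Γ_2^*(w^*) ≠ ∅` the set `Γ_1(w)` is not homogeneous, and
`v` is a vertex with `Γ_2^*(v^*) ≠ ∅`. If `M_2(u) = ∅` for every `u ∈ R_2(v)`
and `R_1(v)` is homogeneous, then the twin graph satisfies the structure `G_2`. -/
theorem structure_G2_of_M2_empty_R1_homogeneous
    {V : Type*} [Fintype V] (G : SimpleGraph V)
    (hdiam : diamEq G 2)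
    (hbeta : metricDim G = Fintype.card V - 3)
    (hall : ∀ w : V, (GammaStar G 2 w).Nonempty → ¬ Homogeneous G (Gamma G 1 w))
    (v : V) (h2 : (GammaStar G 2 v).Nonempty)
    (hM : ∀ u ∈ R2 G v, M2 G v u = ∅)
    (hR1 : Homogeneous G (R1 G v)) :
    structG2 G := by
  classical
  obtain ⟨hc, hd2, -⟩ := hdiam
  -- basic distance facts
  have dist0 : ∀ a b : V, G.dist a b = 0 ↔ a = b := fun a b => hc.dist_eq_zero_iff
  have dist1 : ∀ a b : V, G.dist a b = 1 ↔ G.Adj a b := fun a b => dist_eq_one_iff_adj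
  have dist2 : ∀ a b : V, a ≠ b → ¬ G.Adj a b → G.dist a b = 2 := by
    intro a b hne hna
    have h0 : G.dist a b ≠ 0 := fun h => hne ((dist0 a b).mp h)
    have h1 : G.dist a b ≠ 1 := fun h => hna ((dist1 a b).mp h)
    have := hd2 a b
    omega
  have memG1 : ∀ t : V, t ∈ Gamma G 1 v ↔ G.Adj t v := fun t => dist1 t v
  have memG2 : ∀ t : V, t ∈ Gamma G 2 v ↔ (t ≠ v ∧ ¬ G.Adj t v) := by
    intro t
    constructor
    · intro ht
      have ht' : G.dist t v = 2 := ht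
      exact ⟨fun h => by rw [(dist0 t v).mpr h] at ht'; omega,
             fun h => by rw [(dist1 t v).mpr h] at ht'; omega⟩
    · intro ⟨h1, h2⟩
      exact dist2 t v h1 h2
  have hG1v : ∀ t ∈ Gamma G 1 v, t ≠ v := fun t ht => ((memG1 t).mp ht).ne
  have hG2v : ∀ t ∈ Gamma G 2 v, t ≠ v := fun t ht => ((memG2 t).mp ht).1
  have hG12 : ∀ t ∈ Gamma G 1 v, t ∉ Gamma G 2 v := by
    intro t ht ht2
    exact ((memG2 t).mp ht2).2 ((memG1 t).mp ht)
  -- Gamma 2 v is nonempty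
  have hC_ne : (Gamma G 2 v).Nonempty := by
    by_contra hemp
    have hall2 : ∀ t : V, G.dist t v ≠ 2 := fun t ht => hemp ⟨t, ht⟩
    obtain ⟨A, hA⟩ := h2
    have hA' : (twinGraph G).dist A (cls G v) = 2 := hA
    by_cases hAv : A = cls G v
    · rw [hAv, SimpleGraph.dist_self] at hA'
      omega
    · obtain ⟨w, hw⟩ := A.2
      have hwv : w ≠ v := by
        intro h
        exact hAv (Subtype.ext (by rw [hw, h]; rfl))
      have hwd : G.dist w v ≠ 2 := hall2 w
      have hwle := hd2 w v
      have : G.dist w v = 0 ∨ G.dist w v = 1 := by omega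
      have hadjwv : G.Adj w v := by
        rcases this with h | h
        · exact absurd ((dist0 w v).mp h) hwv
        · exact (dist1 w v).mp h
      have hadj : (twinGraph G).Adj A (cls G v) :=
        ⟨hAv, w, by rw [hw]; exact Or.inl rfl, v, Or.inl rfl, hadjwv⟩
      rw [dist_eq_one_iff_adj.mpr hadj] at hA'
      omega
  -- Gamma 1 v not homogeneous: extract a non-edge and an edge
  have hΓ1 : ¬ Homogeneous G (Gamma G 1 v) := hall v h2
  rw [Homogeneous] at hΓ1
  push_neg at hΓ1
  obtain ⟨⟨x₁, hx₁, x₂, hx₂, hx12, hnadj12⟩, s, hs, t, ht, hst⟩ := hΓ1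
  -- R2 universality
  have hR2adj : ∀ u ∈ R2 G v, ∀ t ∈ Gamma G 1 v, t ≠ u → G.Adj u t := by
    intro u hu t ht htu
    have hM2 := hM u hu
    have hnm : t ∉ M2 G v u := by rw [hM2]; exact Set.notMem_empty t
    have hd2' : G.dist t u ≠ 2 := fun h => hnm ⟨ht, h⟩
    have hle := hd2 t u
    have : G.dist t u = 0 ∨ G.dist t u = 1 := by omega
    rcases this with h | h
    · exact absurd ((dist0 t u).mp h) htu
    · exact ((dist1 t u).mp h).symm
  have hR2noC : ∀ u ∈ R2 G v, ∀ y ∈ Gamma G 2 v, ¬ G.Adj u y :=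
    fun u hu y hy hadj => hu.2 ⟨hu.1, y, hy, hadj⟩
  -- the non-edge pair lies in R1
  have hR1mem : ∀ x x' : V, x ∈ Gamma G 1 v → x' ∈ Gamma G 1 v → x ≠ x' → ¬ G.Adj x x' →
      x ∈ R1 G v := by
    intro x x' hx hx' hne hnadj
    by_contra hxr
    exact hnadj (hR2adj x ⟨hx, hxr⟩ x' hx' (Ne.symm hne))
  have hx₁R1 : x₁ ∈ R1 G v := hR1mem x₁ x₂ hx₁ hx₂ hx12 hnadj12
  have hx₂R1 : x₂ ∈ R1 G v := hR1mem x₂ x₁ hx₂ hx₁ hx12.symm (fun h => hnadj12 h.symm)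
  -- R1 induces an empty graph
  have nadjBB : ∀ a ∈ R1 G v, ∀ b ∈ R1 G v, ¬ G.Adj a b := by
    rcases hR1 with hcomp | hemp
    · exact absurd (hcomp x₁ hx₁R1 x₂ hx₂R1 hx12) hnadj12
    · exact hemp
  have hR1G1 : ∀ x ∈ R1 G v, x ∈ Gamma G 1 v := fun x hx => hx.1
  have hR1R2 : ∀ x ∈ R1 G v, x ∉ R2 G v := fun x hx hx2 => hx2.2 hx
  -- R2 is nonempty
  have hR2ne : ∃ u, u ∈ R2 G v := by
    by_cases hsr : s ∈ R2 G v
    · exact ⟨s, hsr⟩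
    · have hsR1 : s ∈ R1 G v := by
        by_contra hsR1
        exact hsr ⟨hs, hsR1⟩
      refine ⟨t, ht, fun htr => ?_⟩
      exact nadjBB s hsR1 t htr hst
  obtain ⟨u₀, hu₀⟩ := hR2ne
  have hu₀G1 : u₀ ∈ Gamma G 1 v := hu₀.1
  -- every vertex of Gamma 2 v has a neighbour in R1
  have hΓ2nbr : ∀ y ∈ Gamma G 2 v, ∃ m ∈ R1 G v, G.Adj m y := by
    intro y hy
    obtain ⟨p, hp⟩ := (hc.preconnected y v).exists_walk_length_eq_dist
    have hplen : p.length = 2 := by rw [hp]; exact hy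
    have h01 : G.Adj y (p.getVert 1) := by
      have := p.adj_getVert_succ (i := 0) (by omega)
      rwa [p.getVert_zero] at this
    have h12 : G.Adj (p.getVert 1) v := by
      have := p.adj_getVert_succ (i := 1) (by omega)
      rw [show (1 : ℕ) + 1 = p.length from by omega] at this
      rwa [p.getVert_length] at this
    have hmR1 : p.getVert 1 ∈ R1 G v := ⟨(memG1 _).mpr h12, y, hy, h01.symm⟩
    exact ⟨p.getVert 1, hmR1, h01.symm⟩
  -- key adjacency: every R1 vertex is adjacent to every Gamma 2 vertex
  have hkey : ∀ x ∈ R1 G v, ∀ y ∈ Gamma G 2 v, G.Adj x y := by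
    by_contra h
    push_neg at h
    obtain ⟨x', hx'R1, y, hy, hnxy⟩ := h
    obtain ⟨x, hxR1, hxy⟩ := hΓ2nbr y hy
    obtain ⟨hx'G1, y'', hy'', hx'y''⟩ := hx'R1
    have hx'R1' : x' ∈ R1 G v := ⟨hx'G1, y'', hy'', hx'y''⟩
    have hyy'' : y ≠ y'' := fun h => hnxy (h ▸ hx'y'')
    have hxx' : x ≠ x' := fun h => hnxy (h ▸ hxy)
    have hxG1 : x ∈ Gamma G 1 v := hxR1.1
    -- distances needed
    have dvx' : G.dist v x' = 1 := (dist1 v x').mpr ((memG1 x').mp hx'G1).symm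
    have dxx' : G.dist x x' = 2 := dist2 x x' hxx' (nadjBB x hxR1 x' hx'R1')
    have dvu : G.dist v u₀ = 1 := (dist1 v u₀).mpr ((memG1 u₀).mp hu₀G1).symm
    have dyu : G.dist y u₀ = 2 := by
      refine dist2 y u₀ (fun h => hG12 u₀ hu₀G1 (h ▸ hy)) (fun h => hR2noC u₀ hu₀ y hy h.symm)
    have dy''u : G.dist y'' u₀ = 2 := by
      refine dist2 y'' u₀ (fun h => hG12 u₀ hu₀G1 (h ▸ hy'')) (fun h => hR2noC u₀ hu₀ y'' hy'' h.symm)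
    have dxu : G.dist x u₀ = 1 := by
      refine (dist1 x u₀).mpr ?_
      refine (hR2adj u₀ hu₀ x hxG1 ?_).symm
      exact fun h => hR1R2 x hxR1 (h ▸ hu₀)
    have dyx' : G.dist y x' = 2 :=
      dist2 y x' (fun h => hG12 x' hx'G1 (h ▸ hy)) (fun h => hnxy h.symm)
    have dy''x' : G.dist y'' x' = 1 := (dist1 y'' x').mpr hx'y''.symm
    -- apply the four-vertex contradiction with D = {v, x, y, y''}
    have hvx : v ≠ x := fun h => hG1v x hxG1 h.symm
    have hvy : v ≠ y := fun h => hG2v y hy h.symm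
    have hvy'' : v ≠ y'' := fun h => hG2v y'' hy'' h.symm
    have hxy' : x ≠ y := fun h => hG12 x hxG1 (h ▸ hy)
    have hxy'' : x ≠ y'' := fun h => hG12 x hxG1 (h ▸ hy'')
    have hx'v : x' ≠ v := hG1v x' hx'G1
    have hx'x : x' ≠ x := hxx'.symm
    have hx'y : x' ≠ y := fun h => hG12 x' hx'G1 (h ▸ hy)
    have hx'y'2 : x' ≠ y'' := fun h => hG12 x' hx'G1 (h ▸ hy'')
    have hu₀v : u₀ ≠ v := hG1v u₀ hu₀G1
    have hu₀x : u₀ ≠ x := fun h => hR1R2 x hxR1 (h ▸ hu₀)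
    have hu₀y : u₀ ≠ y := fun h => hG12 u₀ hu₀G1 (h ▸ hy)
    have hu₀y'' : u₀ ≠ y'' := fun h => hG12 u₀ hu₀G1 (h ▸ hy'')
    exact four_contra G hc hbeta v x y y'' hvx hvy hvy'' hxy' hxy'' hyy''
      ⟨x', hx'v, hx'x, hx'y, hx'y'2, by rw [dvx', dxx']; omega⟩
      ⟨u₀, hu₀v, hu₀x, hu₀y, hu₀y'', by rw [dvu, dyu]; omega⟩
      ⟨u₀, hu₀v, hu₀x, hu₀y, hu₀y'', by rw [dvu, dy''u]; omega⟩
      ⟨u₀, hu₀v, hu₀x, hu₀y, hu₀y'', by rw [dxu, dyu]; omega⟩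
      ⟨u₀, hu₀v, hu₀x, hu₀y, hu₀y'', by rw [dxu, dy''u]; omega⟩
      ⟨x', hx'v, hx'x, hx'y, hx'y'2, by rw [dyx', dy''x']; omega⟩
  -- Gamma 2 v is homogeneous
  have hChom : (∀ a ∈ Gamma G 2 v, ∀ b ∈ Gamma G 2 v, a ≠ b → G.Adj a b) ∨
      (∀ a ∈ Gamma G 2 v, ∀ b ∈ Gamma G 2 v, ¬ G.Adj a b) := by
    by_contra hC
    have hC' : ¬ Homogeneous G (Gamma G 2 v) := hC
    obtain ⟨p', q', r', hp', hq', hr', hpr', hqr', hadj', hnadj'⟩ := triple_of_not_homog G hC'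
    have hΓ1' : ¬ Homogeneous G (Gamma G 1 v) := hall v h2
    obtain ⟨p, q, r, hp, hq, hr, hpr, hqr, hadjpq, hnadjpr⟩ := triple_of_not_homog G hΓ1'
    -- distances
    have dqp : G.dist q p = 1 := (dist1 q p).mpr hadjpq.symm
    have drp : G.dist r p = 2 := dist2 r p (Ne.symm hpr) (fun h => hnadjpr h.symm)
    have dq'p' : G.dist q' p' = 1 := (dist1 q' p').mpr hadj'.symm
    have dr'p' : G.dist r' p' = 2 := dist2 r' p' (fun h => hpr' h.symm) (fun h => hnadj' h.symm)
    have dqv : G.dist q v = 1 := hq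
    have drv : G.dist r v = 1 := hr
    have dq'v : G.dist q' v = 2 := hq'
    have dr'v : G.dist r' v = 2 := hr'
    have hpq : p ≠ q := hadjpq.ne
    have hp'q' : p' ≠ q' := hadj'.ne
    exact four_contra G hc hbeta q r q' r'
      hqr (fun h => hG12 q hq (h ▸ hq')) (fun h => hG12 q hq (h ▸ hr'))
      (fun h => hG12 r hr (h ▸ hq')) (fun h => hG12 r hr (h ▸ hr')) hqr'
      ⟨p, hpq, hpr, fun h => hG12 p hp (h ▸ hq'), fun h => hG12 p hp (h ▸ hr'),
        by rw [dqp, drp]; omega⟩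
      ⟨v, Ne.symm (hG1v q hq), Ne.symm (hG1v r hr), Ne.symm (hG2v q' hq'),
        Ne.symm (hG2v r' hr'), by rw [dqv, dq'v]; omega⟩
      ⟨v, Ne.symm (hG1v q hq), Ne.symm (hG1v r hr), Ne.symm (hG2v q' hq'),
        Ne.symm (hG2v r' hr'), by rw [dqv, dr'v]; omega⟩
      ⟨v, Ne.symm (hG1v q hq), Ne.symm (hG1v r hr), Ne.symm (hG2v q' hq'),
        Ne.symm (hG2v r' hr'), by rw [drv, dq'v]; omega⟩
      ⟨v, Ne.symm (hG1v q hq), Ne.symm (hG1v r hr), Ne.symm (hG2v q' hq'),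
        Ne.symm (hG2v r' hr'), by rw [drv, dr'v]; omega⟩
      ⟨p', fun h => hG12 q hq (h ▸ hp'), fun h => hG12 r hr (h ▸ hp'), hp'q', hpr',
        by rw [dq'p', dr'p']; omega⟩
  -- the three blocks
  set A : Set V := insert v (R2 G v) with hAdef
  obtain ⟨y₀, hy₀⟩ := hC_ne
  have hvA : v ∈ A := Set.mem_insert v _
  have hu₀A : u₀ ∈ A := Set.mem_insert_of_mem _ hu₀
  have hAcases : ∀ a ∈ A, a = v ∨ a ∈ R2 G v := by
    intro a ha; rwa [hAdef, Set.mem_insert_iff] at ha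
  have hvB : v ∉ R1 G v := fun h => hG1v v h.1 rfl
  have hvC : v ∉ Gamma G 2 v := fun h => hG2v v h rfl
  have hAnB : ∀ a ∈ A, a ∉ R1 G v := by
    intro a ha hb
    rcases hAcases a ha with rfl | h
    · exact hvB hb
    · exact h.2 hb
  have hAnC : ∀ a ∈ A, a ∉ Gamma G 2 v := by
    intro a ha hcC
    rcases hAcases a ha with rfl | h
    · exact hvC hcC
    · exact hG12 a h.1 hcC
  have hBnC : ∀ b ∈ R1 G v, b ∉ Gamma G 2 v := fun b hb => hG12 b hb.1
  have hBnA : ∀ b ∈ R1 G v, b ∉ A := fun b hb hbA => hAnB b hbA hb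
  -- adjacency table
  have adjAA : ∀ a ∈ A, ∀ a' ∈ A, a ≠ a' → G.Adj a a' := by
    intro a ha a' ha' hne
    rcases hAcases a ha with rfl | h
    · rcases hAcases a' ha' with rfl | h'
      · exact absurd rfl hne
      · exact ((memG1 a').mp h'.1).symm
    · rcases hAcases a' ha' with rfl | h'
      · exact (memG1 a).mp h.1
      · exact hR2adj a h a' h'.1 (Ne.symm hne)
  have adjAB : ∀ a ∈ A, ∀ b ∈ R1 G v, G.Adj a b := by
    intro a ha b hb
    rcases hAcases a ha with rfl | h
    · exact ((memG1 b).mp hb.1).symm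
    · exact hR2adj a h b hb.1 (fun he => hR1R2 b hb (he ▸ h))
  have nadjAC : ∀ a ∈ A, ∀ cc ∈ Gamma G 2 v, ¬ G.Adj a cc := by
    intro a ha cc hcc hadj
    rcases hAcases a ha with rfl | h
    · exact ((memG2 cc).mp hcc).2 hadj.symm
    · exact hR2noC a h cc hcc hadj
  -- cover
  have hcover : ∀ t : V, t ∈ A ∨ t ∈ R1 G v ∨ t ∈ Gamma G 2 v := by
    intro t
    have hle := hd2 t v
    have h3 : G.dist t v = 0 ∨ G.dist t v = 1 ∨ G.dist t v = 2 := by omega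
    rcases h3 with h | h | h
    · exact Or.inl (((dist0 t v).mp h) ▸ hvA)
    · by_cases hr : t ∈ R1 G v
      · exact Or.inr (Or.inl hr)
      · exact Or.inl (Set.mem_insert_of_mem _ ⟨h, hr⟩)
    · exact Or.inr (Or.inr h)
  -- neighbour transfer within blocks
  have hAAa : ∀ s ∈ A, ∀ t ∈ A, ∀ z, z ≠ t → G.Adj s z → G.Adj t z := by
    intro s hs t ht z hzt hsz
    rcases hcover z with h | h | h
    · exact adjAA t ht z h (Ne.symm hzt)
    · exact adjAB t ht z h
    · exact absurd hsz (nadjAC s hs z h)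
  have hBBa : ∀ s ∈ R1 G v, ∀ t ∈ R1 G v, ∀ z, z ≠ t → G.Adj s z → G.Adj t z := by
    intro s hs t ht z hzt hsz
    rcases hcover z with h | h | h
    · exact (adjAB z h t ht).symm
    · exact absurd hsz (nadjBB s hs z h)
    · exact hkey t ht z h
  have hCCa : ∀ s ∈ Gamma G 2 v, ∀ t ∈ Gamma G 2 v, ∀ z, z ≠ t → G.Adj s z → G.Adj t z := by
    intro s hs t ht z hzt hsz
    rcases hcover z with h | h | h
    · exact absurd hsz.symm (nadjAC z h s hs)
    · exact (hkey z h t ht).symm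
    · rcases hChom with hcomp | hemp
      · exact (hcomp z h t ht hzt).symm
      · exact absurd hsz (hemp s hs z h)
  -- twins within blocks
  have mkTwins : ∀ s t : V, s ≠ t → (∀ z, z ≠ t → G.Adj s z → G.Adj t z) →
      (∀ z, z ≠ s → G.Adj t z → G.Adj s z) → Twins G s t := by
    intro s t hst hf hb
    refine ⟨hst, ?_⟩
    ext z
    simp only [Set.mem_diff, SimpleGraph.mem_neighborSet, Set.mem_singleton_iff]
    constructor
    · rintro ⟨h1, h2⟩; exact ⟨hf z h2 h1, h1.ne'⟩
    · rintro ⟨h1, h2⟩; exact ⟨hb z h2 h1, h1.ne'⟩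
  have twinsAA : ∀ s ∈ A, ∀ t ∈ A, s ≠ t → Twins G s t :=
    fun s hs t ht hst => mkTwins s t hst (hAAa s hs t ht) (hAAa t ht s hs)
  have twinsBB : ∀ s ∈ R1 G v, ∀ t ∈ R1 G v, s ≠ t → Twins G s t :=
    fun s hs t ht hst => mkTwins s t hst (hBBa s hs t ht) (hBBa t ht s hs)
  have twinsCC : ∀ s ∈ Gamma G 2 v, ∀ t ∈ Gamma G 2 v, s ≠ t → Twins G s t :=
    fun s hs t ht hst => mkTwins s t hst (hCCa s hs t ht) (hCCa t ht s hs)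
  have twins_symm : ∀ s t : V, Twins G s t → Twins G t s :=
    fun s t ⟨h1, h2⟩ => ⟨Ne.symm h1, h2.symm⟩
  -- non-twins across blocks
  have ntAB : ∀ s ∈ A, ∀ t ∈ R1 G v, ¬ Twins G s t := by
    rintro s hs t ht ⟨hne, hNeq⟩
    have h1 : y₀ ∈ G.neighborSet t \ {s} :=
      ⟨hkey t ht y₀ hy₀, fun h => hAnC s hs (h ▸ hy₀)⟩
    rw [← hNeq] at h1
    exact nadjAC s hs y₀ hy₀ h1.1
  have ntAC : ∀ s ∈ A, ∀ t ∈ Gamma G 2 v, ¬ Twins G s t := by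
    rintro s hs t ht ⟨hne, hNeq⟩
    by_cases hsv : s = v
    · subst hsv
      have h1 : u₀ ∈ G.neighborSet s \ {t} :=
        ⟨adjAA s hvA u₀ hu₀A (fun h => hG1v u₀ hu₀G1 h.symm),
         fun h => hG12 u₀ hu₀G1 (h ▸ ht)⟩
      rw [hNeq] at h1
      exact nadjAC u₀ hu₀A t ht h1.1.symm
    · have hsR2 : s ∈ R2 G v := by
        rcases hAcases s hs with h | h
        · exact absurd h hsv
        · exact h
      have h1 : v ∈ G.neighborSet s \ {t} :=
        ⟨(memG1 s).mp hsR2.1, fun h => hG2v t ht h.symm⟩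
      rw [hNeq] at h1
      exact ((memG2 t).mp ht).2 h1.1
  have ntBC : ∀ s ∈ R1 G v, ∀ t ∈ Gamma G 2 v, ¬ Twins G s t := by
    rintro s hs t ht ⟨hne, hNeq⟩
    have h1 : v ∈ G.neighborSet s \ {t} :=
      ⟨(memG1 s).mp hs.1, fun h => hG2v t ht h.symm⟩
    rw [hNeq] at h1
    exact ((memG2 t).mp ht).2 h1.1
  -- twin classes equal blocks
  have hclsA : ∀ w ∈ A, twinClass G w = A := by
    intro w hw
    ext z
    constructor
    · intro hz
      rcases hz with rfl | htw
      · exact hw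
      · by_contra hzA
        rcases hcover z with h | h | h
        · exact hzA h
        · exact ntAB w hw z h htw
        · exact ntAC w hw z h htw
    · intro hz
      by_cases hwz : w = z
      · exact Or.inl hwz
      · exact Or.inr (twinsAA w hw z hz hwz)
  have hclsB : ∀ w ∈ R1 G v, twinClass G w = R1 G v := by
    intro w hw
    ext z
    constructor
    · intro hz
      rcases hz with rfl | htw
      · exact hw
      · by_contra hzB
        rcases hcover z with h | h | h
        · exact ntAB z h w hw (twins_symm w z htw)
        · exact hzB h
        · exact ntBC w hw z h htw
    · intro hz
      by_cases hwz : w = z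
      · exact Or.inl hwz
      · exact Or.inr (twinsBB w hw z hz hwz)
  have hclsC : ∀ w ∈ Gamma G 2 v, twinClass G w = Gamma G 2 v := by
    intro w hw
    ext z
    constructor
    · intro hz
      rcases hz with rfl | htw
      · exact hw
      · by_contra hzC
        rcases hcover z with h | h | h
        · exact ntAC z h w hw (twins_symm w z htw)
        · exact ntBC z h w hw (twins_symm w z htw)
        · exact hzC h
    · intro hz
      by_cases hwz : w = z
      · exact Or.inl hwz
      · exact Or.inr (twinsCC w hw z hz hwz)
  -- assemble the twin-graph structure
  refine ⟨cls G v, cls G x₁, cls G y₀, ?_, ?_, ?_, ?_, ?_, ?_, ?_, ?_⟩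
  · -- a ≠ b
    intro h
    have h1 : twinClass G v = twinClass G x₁ := congrArg Subtype.val h
    rw [hclsA v hvA, hclsB x₁ hx₁R1] at h1
    exact hAnB v hvA (h1 ▸ hvA)
  · -- a ≠ c
    intro h
    have h1 : twinClass G v = twinClass G y₀ := congrArg Subtype.val h
    rw [hclsA v hvA, hclsC y₀ hy₀] at h1
    exact hAnC v hvA (h1 ▸ hvA)
  · -- b ≠ c
    intro h
    have h1 : twinClass G x₁ = twinClass G y₀ := congrArg Subtype.val h
    rw [hclsB x₁ hx₁R1, hclsC y₀ hy₀] at h1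
    exact hBnC x₁ hx₁R1 (h1 ▸ hx₁R1)
  · -- cover
    intro X
    obtain ⟨w, hw⟩ := X.2
    rcases hcover w with h | h | h
    · exact Or.inl (Subtype.ext (hw.trans ((hclsA w h).trans (hclsA v hvA).symm)))
    · exact Or.inr (Or.inl (Subtype.ext (hw.trans ((hclsB w h).trans (hclsB x₁ hx₁R1).symm))))
    · exact Or.inr (Or.inr (Subtype.ext (hw.trans ((hclsC w h).trans (hclsC y₀ hy₀).symm))))
  · -- Adj a b
    refine ⟨?_, v, Or.inl rfl, x₁, Or.inl rfl, adjAB v hvA x₁ hx₁R1⟩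
    intro h
    have h1 : twinClass G v = twinClass G x₁ := congrArg Subtype.val h
    rw [hclsA v hvA, hclsB x₁ hx₁R1] at h1
    exact hAnB v hvA (h1 ▸ hvA)
  · -- Adj b c
    refine ⟨?_, x₁, Or.inl rfl, y₀, Or.inl rfl, hkey x₁ hx₁R1 y₀ hy₀⟩
    intro h
    have h1 : twinClass G x₁ = twinClass G y₀ := congrArg Subtype.val h
    rw [hclsB x₁ hx₁R1, hclsC y₀ hy₀] at h1
    exact hBnC x₁ hx₁R1 (h1 ▸ hx₁R1)
  · -- ¬ Adj a c
    rintro ⟨-, p, hp, q, hq, hpq⟩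
    have hp' : p ∈ A := by
      have := hclsA v hvA
      rw [show (cls G v).1 = twinClass G v from rfl, this] at hp
      exact hp
    have hq' : q ∈ Gamma G 2 v := by
      have := hclsC y₀ hy₀
      rw [show (cls G y₀).1 = twinClass G y₀ from rfl, this] at hq
      exact hq
    exact nadjAC p hp' q hq' hpq
  · -- types
    left
    constructor
    · -- typeN b
      constructor
      · refine ⟨x₁, Or.inl rfl, x₂, ?_, hx12⟩
        rw [show (cls G x₁).1 = twinClass G x₁ from rfl, hclsB x₁ hx₁R1]
        exact hx₂R1
      · intro p hp q hq
        rw [show (cls G x₁).1 = twinClass G x₁ from rfl, hclsB x₁ hx₁R1] at hp hq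
        exact nadjBB p hp q hq
    · -- typeK a
      left
      constructor
      · refine ⟨v, Or.inl rfl, u₀, ?_, Ne.symm (hG1v u₀ hu₀G1)⟩
        rw [show (cls G v).1 = twinClass G v from rfl, hclsA v hvA]
        exact hu₀A
      · intro p hp q hq hne
        rw [show (cls G v).1 = twinClass G v from rfl, hclsA v hvA] at hp hq
        exact adjAA p hp q hq hne

end PaperMetricDim
end
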